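/- In the quadratic quasi-Newton scheme with initialization G₀ = L·B where μB ⪯ A ⪯ LB, and updates G_{k+1} = Broyd_{φ_k}(A, G_k, u_k) with φ_k ∈ [0,1], one has A ⪯ G_k ⪯ (L/μ)A for all k ≥ 0, and consequently λ_f(x_k) ≤ (1 - μ/L)^k λ_f(x₀). -/

import Mathlib

open Matrix

noncomputable def DFPupd {n : ℕ} (A G : Matrix (Fin n) (Fin n) ℝ) (u : Fin n → ℝ) :
    Matrix (Fin n) (Fin n) ℝ :=
  G - ((u ⬝ᵥ A.mulVec u)⁻¹) •
      (vecMulVec (A.mulVec u) (G.mulVec u) + vecMulVec (G.mulVec u) (A.mulVec u))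
    + (((u ⬝ᵥ G.mulVec u) / (u ⬝ᵥ A.mulVec u) + 1) * (u ⬝ᵥ A.mulVec u)⁻¹) •
      vecMulVec (A.mulVec u) (A.mulVec u)

noncomputable def BFGSupd {n : ℕ} (A G : Matrix (Fin n) (Fin n) ℝ) (u : Fin n → ℝ) :
    Matrix (Fin n) (Fin n) ℝ :=
  G - ((u ⬝ᵥ G.mulVec u)⁻¹) • vecMulVec (G.mulVec u) (G.mulVec u)
    + ((u ⬝ᵥ A.mulVec u)⁻¹) • vecMulVec (A.mulVec u) (A.mulVec u)

noncomputable def Broyd {n : ℕ} (φ : ℝ) (A G : Matrix (Fin n) (Fin n) ℝ) (u : Fin n → ℝ) :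
    Matrix (Fin n) (Fin n) ℝ :=
  if u = 0 then G else φ • DFPupd A G u + (1 - φ) • BFGSupd A G u

/-- Closeness measure θ(A, G, u). -/
noncomputable def theta {n : ℕ} (A G : Matrix (Fin n) (Fin n) ℝ) (u : Fin n → ℝ) : ℝ :=
  if u = 0 then 0 else
    Real.sqrt ((u ⬝ᵥ ((G - A) * A⁻¹ * (G - A)).mulVec u) /
      (u ⬝ᵥ (G * A⁻¹ * G).mulVec u))

/-- Trace potential σ(A, G). -/
noncomputable def sigmaPot {n : ℕ} (A G : Matrix (Fin n) (Fin n) ℝ) : ℝ :=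
  (A⁻¹ * (G - A)).trace

/-- Byrd–Nocedal potential ψ(A, G). -/
noncomputable def psiPot {n : ℕ} (A G : Matrix (Fin n) (Fin n) ℝ) : ℝ :=
  (A⁻¹ * (G - A)).trace - Real.log (A⁻¹ * G).det

noncomputable def omegaFn (t : ℝ) : ℝ := t - Real.log (1 + t)

/-- Gradient norm λ_f(x) = ‖∇f(x)‖_{A⁻¹} for the quadratic f(x) = ½xᵀAx - bᵀx. -/
noncomputable def lamQ {n : ℕ} (A : Matrix (Fin n) (Fin n) ℝ) (b x : Fin n → ℝ) : ℝ :=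
  Real.sqrt ((A.mulVec x - b) ⬝ᵥ A⁻¹.mulVec (A.mulVec x - b))


section Helpers

variable {n : ℕ}

lemma myVecMulVec_mulVec (a b v : Fin n → ℝ) :
    (vecMulVec a b).mulVec v = (b ⬝ᵥ v) • a := by
  ext i
  simp [vecMulVec, mulVec, dotProduct, Finset.mul_sum, mul_comm, mul_assoc, mul_left_comm]

lemma dot_mulVec_symm (M : Matrix (Fin n) (Fin n) ℝ) (hM : Mᵀ = M) (x y : Fin n → ℝ) :
    x ⬝ᵥ M.mulVec y = y ⬝ᵥ M.mulVec x := by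
  rw [Matrix.dotProduct_mulVec, ← Matrix.mulVec_transpose, hM, dotProduct_comm]

lemma herm_transpose {M : Matrix (Fin n) (Fin n) ℝ} (h : M.IsHermitian) : Mᵀ = M := h

lemma transpose_entries {M : Matrix (Fin n) (Fin n) ℝ} (h : Mᵀ = M) (i j : Fin n) :
    M j i = M i j := by
  have := congrFun (congrFun h i) j
  simpa using this

lemma psd_nonneg {M : Matrix (Fin n) (Fin n) ℝ} (h : M.PosSemidef) (x : Fin n → ℝ) :
    0 ≤ x ⬝ᵥ M.mulVec x := by
  have := h.dotProduct_mulVec_nonneg x; simpa using this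

lemma pd_pos {M : Matrix (Fin n) (Fin n) ℝ} (h : M.PosDef) {x : Fin n → ℝ} (hx : x ≠ 0) :
    0 < x ⬝ᵥ M.mulVec x := by
  have := h.dotProduct_mulVec_pos hx; simpa using this

lemma psd_mk {M : Matrix (Fin n) (Fin n) ℝ} (h1 : M.IsHermitian)
    (h2 : ∀ x, 0 ≤ x ⬝ᵥ M.mulVec x) : M.PosSemidef :=
  Matrix.PosSemidef.of_dotProduct_mulVec_nonneg h1 (fun x => by simpa using h2 x)

lemma herm_mk {M : Matrix (Fin n) (Fin n) ℝ} (h : ∀ i j, M j i = M i j) : M.IsHermitian := by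
  ext i j
  simpa using h i j

lemma herm_smul {M : Matrix (Fin n) (Fin n) ℝ} (h : M.IsHermitian) (c : ℝ) :
    (c • M).IsHermitian := by
  apply herm_mk; intro i j
  simp [transpose_entries (herm_transpose h) i j]

lemma psd_smul {M : Matrix (Fin n) (Fin n) ℝ} (h : M.PosSemidef) {c : ℝ} (hc : 0 ≤ c) :
    (c • M).PosSemidef := by
  apply psd_mk
  · apply herm_mk; intro i j
    simp [transpose_entries (herm_transpose h.1) i j]
  · intro x
    rw [Matrix.smul_mulVec, dotProduct_smul, smul_eq_mul]
    exact mul_nonneg hc (psd_nonneg h x)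

lemma psd_add {M N : Matrix (Fin n) (Fin n) ℝ} (h1 : M.PosSemidef) (h2 : N.PosSemidef) :
    (M + N).PosSemidef := by
  apply psd_mk
  · apply herm_mk; intro i j
    simp [transpose_entries (herm_transpose h1.1) i j,
      transpose_entries (herm_transpose h2.1) i j]
  · intro x
    rw [Matrix.add_mulVec, dotProduct_add]
    exact add_nonneg (psd_nonneg h1 x) (psd_nonneg h2 x)

/-- Cauchy–Schwarz for a PSD quadratic form. -/
lemma psd_cauchy_schwarz {M : Matrix (Fin n) (Fin n) ℝ} (h : M.PosSemidef) (x y : Fin n → ℝ) :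
    (x ⬝ᵥ M.mulVec y) ^ 2 ≤ (x ⬝ᵥ M.mulVec x) * (y ⬝ᵥ M.mulVec y) := by
  have hsym := herm_transpose h.1
  have key : ∀ t : ℝ, 0 ≤ (y ⬝ᵥ M.mulVec y) * (t*t) + (2 * (x ⬝ᵥ M.mulVec y)) * t + (x ⬝ᵥ M.mulVec x) := by
    intro t
    have h0 := psd_nonneg h (x + t • y)
    have e1 : (x + t • y) ⬝ᵥ M.mulVec (x + t • y)
        = (y ⬝ᵥ M.mulVec y) * (t*t) + (2 * (x ⬝ᵥ M.mulVec y)) * t + (x ⬝ᵥ M.mulVec x) := by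
      rw [Matrix.mulVec_add, Matrix.mulVec_smul]
      rw [add_dotProduct, smul_dotProduct, dotProduct_add, dotProduct_add,
        dotProduct_smul, dotProduct_smul]
      rw [dot_mulVec_symm M hsym y x]
      simp only [smul_eq_mul]
      ring
    linarith [e1 ▸ h0]
  have hd := discrim_le_zero key
  have : discrim (y ⬝ᵥ M.mulVec y) (2 * (x ⬝ᵥ M.mulVec y)) (x ⬝ᵥ M.mulVec x)
      = 4 * ((x ⬝ᵥ M.mulVec y) ^ 2 - (x ⬝ᵥ M.mulVec x) * (y ⬝ᵥ M.mulVec y)) := by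
    unfold discrim; ring
  nlinarith [hd, this]

lemma quad_w_expand (M : Matrix (Fin n) (Fin n) ℝ) (hM : Mᵀ = M) (v u : Fin n → ℝ) (α : ℝ) :
    (v - α • u) ⬝ᵥ M.mulVec (v - α • u)
      = v ⬝ᵥ M.mulVec v - 2*α*(v ⬝ᵥ M.mulVec u) + α^2 * (u ⬝ᵥ M.mulVec u) := by
  rw [Matrix.mulVec_sub, Matrix.mulVec_smul, sub_dotProduct, smul_dotProduct,
    dotProduct_sub, dotProduct_sub, dotProduct_smul, dotProduct_smul,
    dot_mulVec_symm M hM u v]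
  simp only [smul_eq_mul]
  ring

lemma quad_DFP (A G : Matrix (Fin n) (Fin n) ℝ) (u v : Fin n → ℝ) :
    v ⬝ᵥ (DFPupd A G u).mulVec v
      = v ⬝ᵥ G.mulVec v
        - (u ⬝ᵥ A.mulVec u)⁻¹ * (2 * (v ⬝ᵥ A.mulVec u) * (v ⬝ᵥ G.mulVec u))
        + ((u ⬝ᵥ G.mulVec u) / (u ⬝ᵥ A.mulVec u) + 1) * (u ⬝ᵥ A.mulVec u)⁻¹
          * (v ⬝ᵥ A.mulVec u) ^ 2 := by
  simp only [DFPupd, Matrix.sub_mulVec, Matrix.add_mulVec, Matrix.smul_mulVec,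
    myVecMulVec_mulVec, Matrix.mulVec_add, dotProduct_sub, dotProduct_add, dotProduct_smul,
    smul_eq_mul, smul_add, smul_smul, dotProduct_comm (G.mulVec u) v,
    dotProduct_comm (A.mulVec u) v]
  ring

lemma quad_BFGS (A G : Matrix (Fin n) (Fin n) ℝ) (u v : Fin n → ℝ) :
    v ⬝ᵥ (BFGSupd A G u).mulVec v
      = v ⬝ᵥ G.mulVec v
        - (u ⬝ᵥ G.mulVec u)⁻¹ * (v ⬝ᵥ G.mulVec u) ^ 2
        + (u ⬝ᵥ A.mulVec u)⁻¹ * (v ⬝ᵥ A.mulVec u) ^ 2 := by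
  simp only [BFGSupd, Matrix.sub_mulVec, Matrix.add_mulVec, Matrix.smul_mulVec,
    myVecMulVec_mulVec, dotProduct_sub, dotProduct_add, dotProduct_smul,
    smul_eq_mul, dotProduct_comm (G.mulVec u) v, dotProduct_comm (A.mulVec u) v]
  ring

end Helpers

section Bounds

variable {n : ℕ}

lemma gsym_of {A G : Matrix (Fin n) (Fin n) ℝ} (hA : Aᵀ = A)
    (h1 : (G - A).PosSemidef) : Gᵀ = G := by
  have h := herm_transpose h1.1
  rw [Matrix.transpose_sub, hA] at h
  have := congrArg (· + A) h
  simpa using this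

lemma dfp_bounds (A G : Matrix (Fin n) (Fin n) ℝ) (hA : A.PosDef) (η : ℝ) (hη : 1 ≤ η)
    (h1 : (G - A).PosSemidef) (h2 : (η • A - G).PosSemidef) (u : Fin n → ℝ) (hu : u ≠ 0) :
    (DFPupd A G u - A).PosSemidef ∧ (η • A - DFPupd A G u).PosSemidef := by
  have hAsym : Aᵀ = A := herm_transpose hA.1
  have hGsym : Gᵀ = G := gsym_of hAsym h1
  have ha : 0 < u ⬝ᵥ A.mulVec u := pd_pos hA hu
  have hane : (u ⬝ᵥ A.mulVec u) ≠ 0 := ne_of_gt ha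
  have main : ∀ v : Fin n → ℝ, ∃ w : Fin n → ℝ, ∃ α : ℝ,
      v ⬝ᵥ (DFPupd A G u).mulVec v
        = w ⬝ᵥ G.mulVec w + α^2 * (u ⬝ᵥ A.mulVec u)
      ∧ v ⬝ᵥ A.mulVec v = w ⬝ᵥ A.mulVec w + α^2 * (u ⬝ᵥ A.mulVec u) := by
    intro v
    refine ⟨v - ((v ⬝ᵥ A.mulVec u)/(u ⬝ᵥ A.mulVec u)) • u,
      (v ⬝ᵥ A.mulVec u)/(u ⬝ᵥ A.mulVec u), ?_, ?_⟩
    · rw [quad_DFP, quad_w_expand G hGsym]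
      field_simp
      ring
    · rw [quad_w_expand A hAsym]
      field_simp
      ring
  have hherm : (DFPupd A G u).IsHermitian := by
    apply herm_mk; intro i j
    simp only [DFPupd, Matrix.sub_apply, Matrix.add_apply, Matrix.smul_apply,
      vecMulVec_apply, smul_eq_mul, transpose_entries hAsym, transpose_entries hGsym]
    ring
  constructor
  · apply psd_mk (hherm.sub hA.1)
    intro v
    obtain ⟨w, α, e1, e2⟩ := main v
    have h0 : 0 ≤ w ⬝ᵥ G.mulVec w - w ⬝ᵥ A.mulVec w := by
      have := psd_nonneg h1 w
      rwa [Matrix.sub_mulVec, dotProduct_sub] at this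
    rw [Matrix.sub_mulVec, dotProduct_sub, e1, e2]
    linarith
  · apply psd_mk ((herm_smul hA.1 η).sub hherm)
    intro v
    obtain ⟨w, α, e1, e2⟩ := main v
    have h0 : 0 ≤ η * (w ⬝ᵥ A.mulVec w) - w ⬝ᵥ G.mulVec w := by
      have := psd_nonneg h2 w
      rwa [Matrix.sub_mulVec, dotProduct_sub, Matrix.smul_mulVec,
        dotProduct_smul, smul_eq_mul] at this
    rw [Matrix.sub_mulVec, dotProduct_sub, Matrix.smul_mulVec,
      dotProduct_smul, smul_eq_mul, e1, e2]
    nlinarith [h0, mul_nonneg (mul_nonneg (sub_nonneg.2 hη) (sq_nonneg α)) ha.le]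

lemma bfgs_bounds (A G : Matrix (Fin n) (Fin n) ℝ) (hA : A.PosDef) (η : ℝ) (hη : 1 ≤ η)
    (h1 : (G - A).PosSemidef) (h2 : (η • A - G).PosSemidef) (u : Fin n → ℝ) (hu : u ≠ 0) :
    (BFGSupd A G u - A).PosSemidef ∧ (η • A - BFGSupd A G u).PosSemidef := by
  have hAsym : Aᵀ = A := herm_transpose hA.1
  have hGsym : Gᵀ = G := gsym_of hAsym h1
  have ha : 0 < u ⬝ᵥ A.mulVec u := pd_pos hA hu
  have hane : (u ⬝ᵥ A.mulVec u) ≠ 0 := ne_of_gt ha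
  have hguA : 0 ≤ u ⬝ᵥ G.mulVec u - u ⬝ᵥ A.mulVec u := by
    have := psd_nonneg h1 u
    rwa [Matrix.sub_mulVec, dotProduct_sub] at this
  have hγ : 0 < u ⬝ᵥ G.mulVec u := by linarith
  have hγne : (u ⬝ᵥ G.mulVec u) ≠ 0 := ne_of_gt hγ
  have main : ∀ v : Fin n → ℝ, ∃ w : Fin n → ℝ, ∃ α : ℝ,
      v ⬝ᵥ (BFGSupd A G u).mulVec v
        = w ⬝ᵥ G.mulVec w - (w ⬝ᵥ G.mulVec u)^2 / (u ⬝ᵥ G.mulVec u)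
          + α^2 * (u ⬝ᵥ A.mulVec u)
      ∧ v ⬝ᵥ A.mulVec v = w ⬝ᵥ A.mulVec w + α^2 * (u ⬝ᵥ A.mulVec u)
      ∧ w ⬝ᵥ A.mulVec u = 0 := by
    intro v
    refine ⟨v - ((v ⬝ᵥ A.mulVec u)/(u ⬝ᵥ A.mulVec u)) • u,
      (v ⬝ᵥ A.mulVec u)/(u ⬝ᵥ A.mulVec u), ?_, ?_, ?_⟩
    · have hwGu : (v - ((v ⬝ᵥ A.mulVec u)/(u ⬝ᵥ A.mulVec u)) • u) ⬝ᵥ G.mulVec u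
          = v ⬝ᵥ G.mulVec u - ((v ⬝ᵥ A.mulVec u)/(u ⬝ᵥ A.mulVec u)) * (u ⬝ᵥ G.mulVec u) := by
        rw [sub_dotProduct, smul_dotProduct, smul_eq_mul]
      rw [quad_BFGS, quad_w_expand G hGsym, hwGu]
      field_simp
      ring
    · rw [quad_w_expand A hAsym]
      field_simp
      ring
    · rw [sub_dotProduct, smul_dotProduct, smul_eq_mul]
      field_simp
      ring
  have hherm : (BFGSupd A G u).IsHermitian := by
    apply herm_mk; intro i j
    simp only [BFGSupd, Matrix.sub_apply, Matrix.add_apply, Matrix.smul_apply,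
      vecMulVec_apply, smul_eq_mul, transpose_entries hAsym, transpose_entries hGsym]
    ring
  constructor
  · apply psd_mk (hherm.sub hA.1)
    intro v
    obtain ⟨w, α, e1, e2, e3⟩ := main v
    have hW : 0 ≤ w ⬝ᵥ G.mulVec w - w ⬝ᵥ A.mulVec w := by
      have := psd_nonneg h1 w
      rwa [Matrix.sub_mulVec, dotProduct_sub] at this
    -- w'Gu = w'(G-A)u since w'Au = 0
    have hm : w ⬝ᵥ G.mulVec u = w ⬝ᵥ (G - A).mulVec u := by
      rw [Matrix.sub_mulVec, dotProduct_sub, e3, sub_zero]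
    have hcs := psd_cauchy_schwarz h1 w u
    have huu : w ⬝ᵥ (G - A).mulVec w = w ⬝ᵥ G.mulVec w - w ⬝ᵥ A.mulVec w := by
      rw [Matrix.sub_mulVec, dotProduct_sub]
    have huGA : u ⬝ᵥ (G - A).mulVec u = u ⬝ᵥ G.mulVec u - u ⬝ᵥ A.mulVec u := by
      rw [Matrix.sub_mulVec, dotProduct_sub]
    have key : (w ⬝ᵥ G.mulVec u)^2 ≤ (w ⬝ᵥ G.mulVec w - w ⬝ᵥ A.mulVec w) * (u ⬝ᵥ G.mulVec u) := by
      rw [hm]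
      calc (w ⬝ᵥ (G - A).mulVec u)^2
          ≤ (w ⬝ᵥ (G - A).mulVec w) * (u ⬝ᵥ (G - A).mulVec u) := hcs
        _ ≤ (w ⬝ᵥ G.mulVec w - w ⬝ᵥ A.mulVec w) * (u ⬝ᵥ G.mulVec u) := by
            rw [huu, huGA]
            apply mul_le_mul_of_nonneg_left _ hW
            linarith
    rw [Matrix.sub_mulVec, dotProduct_sub, e1, e2]
    have : (w ⬝ᵥ G.mulVec u)^2 / (u ⬝ᵥ G.mulVec u) ≤ w ⬝ᵥ G.mulVec w - w ⬝ᵥ A.mulVec w := by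
      rw [div_le_iff₀ hγ]
      exact key
    linarith
  · apply psd_mk ((herm_smul hA.1 η).sub hherm)
    intro v
    obtain ⟨w, α, e1, e2, e3⟩ := main v
    have h0 : 0 ≤ η * (w ⬝ᵥ A.mulVec w) - w ⬝ᵥ G.mulVec w := by
      have := psd_nonneg h2 w
      rwa [Matrix.sub_mulVec, dotProduct_sub, Matrix.smul_mulVec,
        dotProduct_smul, smul_eq_mul] at this
    rw [Matrix.sub_mulVec, dotProduct_sub, Matrix.smul_mulVec,
      dotProduct_smul, smul_eq_mul, e1, e2]
    have hsq : 0 ≤ (w ⬝ᵥ G.mulVec u)^2 / (u ⬝ᵥ G.mulVec u) := by positivity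
    nlinarith [h0, hsq, mul_nonneg (mul_nonneg (sub_nonneg.2 hη) (sq_nonneg α)) ha.le]

lemma broyd_bounds (A G : Matrix (Fin n) (Fin n) ℝ) (hA : A.PosDef) (η : ℝ) (hη : 1 ≤ η)
    (h1 : (G - A).PosSemidef) (h2 : (η • A - G).PosSemidef) (φ : ℝ)
    (hφ0 : 0 ≤ φ) (hφ1 : φ ≤ 1) (u : Fin n → ℝ) :
    (Broyd φ A G u - A).PosSemidef ∧ (η • A - Broyd φ A G u).PosSemidef := by
  by_cases hu : u = 0
  · rw [Broyd, if_pos hu]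
    exact ⟨h1, h2⟩
  · rw [Broyd, if_neg hu]
    obtain ⟨hd1, hd2⟩ := dfp_bounds A G hA η hη h1 h2 u hu
    obtain ⟨hb1, hb2⟩ := bfgs_bounds A G hA η hη h1 h2 u hu
    have hφA : φ • A + (1 - φ) • A = A := by
      rw [← add_smul, show φ + (1 - φ) = 1 by ring, one_smul]
    constructor
    · have e : φ • DFPupd A G u + (1 - φ) • BFGSupd A G u - A
          = φ • (DFPupd A G u - A) + (1 - φ) • (BFGSupd A G u - A) := by
        module
      rw [e]
      exact psd_add (psd_smul hd1 hφ0) (psd_smul hb1 (by linarith))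
    · have e : η • A - (φ • DFPupd A G u + (1 - φ) • BFGSupd A G u)
          = φ • (η • A - DFPupd A G u) + (1 - φ) • (η • A - BFGSupd A G u) := by
        module
      rw [e]
      exact psd_add (psd_smul hd2 hφ0) (psd_smul hb2 (by linarith))

end Bounds

section Contraction

variable {n : ℕ}

lemma contraction (A G : Matrix (Fin n) (Fin n) ℝ) (hA : A.PosDef) (η : ℝ) (hη : 1 ≤ η)
    (h1 : (G - A).PosSemidef) (h2 : (η • A - G).PosSemidef) (b x0 : Fin n → ℝ) :
    lamQ A b (x0 - G⁻¹.mulVec (A.mulVec x0 - b)) ≤ (1 - 1/η) * lamQ A b x0 := by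
  have hη0 : (0:ℝ) < η := lt_of_lt_of_le one_pos hη
  have hAsym : Aᵀ = A := herm_transpose hA.1
  have hGApsd := h1
  have hGpd : G.PosDef := by
    have e : G = A + (G - A) := by abel
    rw [e]
    exact hA.add_posSemidef h1
  have hGdet : IsUnit G.det := isUnit_iff_ne_zero.mpr (ne_of_gt hGpd.det_pos)
  have hAdet : IsUnit A.det := isUnit_iff_ne_zero.mpr (ne_of_gt hA.det_pos)
  set g := A.mulVec x0 - b with hg
  set s := G⁻¹.mulVec g with hs
  have hGs : G.mulVec s = g := by
    rw [hs, Matrix.mulVec_mulVec, Matrix.mul_nonsing_inv _ hGdet, Matrix.one_mulVec]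
  set d := (G - A).mulVec s with hd
  set w := A⁻¹.mulVec d with hwdef
  have hAw : A.mulVec w = d := by
    rw [hwdef, Matrix.mulVec_mulVec, Matrix.mul_nonsing_inv _ hAdet, Matrix.one_mulVec]
  have hgnew : A.mulVec (x0 - s) - b = d := by
    rw [Matrix.mulVec_sub, hd, Matrix.sub_mulVec, hGs, hg]
    abel
  -- scalar quantities
  set p := s ⬝ᵥ A.mulVec s with hp_def
  set q := s ⬝ᵥ (G - A).mulVec s with hq_def
  set S := w ⬝ᵥ A.mulVec w with hS_def
  set t := w ⬝ᵥ (G - A).mulVec w with ht_def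
  have hp : 0 ≤ p := psd_nonneg hA.posSemidef s
  have hq : 0 ≤ q := psd_nonneg h1 s
  have hS : 0 ≤ S := psd_nonneg hA.posSemidef w
  have ht : 0 ≤ t := psd_nonneg h1 w
  have hdw : d ⬝ᵥ w = S := by rw [← hAw, dotProduct_comm]
  have hGAsym : (G - A)ᵀ = G - A := herm_transpose h1.1
  have hwd : w ⬝ᵥ d = S := by rw [dotProduct_comm]; exact hdw
  have hsd : s ⬝ᵥ d = q := rfl
  -- Cauchy-Schwarz : S^2 ≤ q * t
  have hcs : S^2 ≤ q * t := by
    have := psd_cauchy_schwarz h1 s w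
    have e : s ⬝ᵥ (G - A).mulVec w = S := by
      rw [dot_mulVec_symm _ hGAsym s w, ← hd, hwd]
    rw [e] at this
    exact this
  -- t ≤ (η - 1) * S
  have ht' : t ≤ (η - 1) * S := by
    have h2w := psd_nonneg h2 w
    rw [Matrix.sub_mulVec, dotProduct_sub, Matrix.smul_mulVec, dotProduct_smul,
      smul_eq_mul] at h2w
    have e : w ⬝ᵥ G.mulVec w = t + S := by
      rw [ht_def, hS_def, Matrix.sub_mulVec, dotProduct_sub]
      ring
    rw [e] at h2w
    linarith
  -- q ≤ (η - 1) * p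
  have hq' : q ≤ (η - 1) * p := by
    have h2s := psd_nonneg h2 s
    rw [Matrix.sub_mulVec, dotProduct_sub, Matrix.smul_mulVec, dotProduct_smul,
      smul_eq_mul] at h2s
    have e : s ⬝ᵥ G.mulVec s = q + p := by
      rw [hq_def, hp_def, Matrix.sub_mulVec, dotProduct_sub]
      ring
    rw [e] at h2s
    linarith
  -- S ≤ (η - 1) * q
  have hSq : S ≤ (η - 1) * q := by
    nlinarith [hcs, mul_le_mul_of_nonneg_left ht' hq, hS, hq,
      mul_nonneg (sub_nonneg.2 hη) hq]
  -- lamQ values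
  have hlam_new : lamQ A b (x0 - s) = Real.sqrt S := by
    rw [lamQ, hgnew, hdw]
  have hgAs : g = A.mulVec s + d := by
    rw [hd, Matrix.sub_mulVec, hGs]
    abel
  have hAinv_g : A⁻¹.mulVec g = s + w := by
    rw [hgAs, Matrix.mulVec_add, Matrix.mulVec_mulVec, Matrix.nonsing_inv_mul _ hAdet,
      Matrix.one_mulVec, hwdef]
  have hlam_old : lamQ A b x0 = Real.sqrt (p + 2*q + S) := by
    rw [lamQ, ← hg, hAinv_g]
    congr 1
    rw [hgAs, add_dotProduct, dotProduct_add, dotProduct_add]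
    have e1 : A.mulVec s ⬝ᵥ s = p := by rw [dotProduct_comm]
    have e2 : A.mulVec s ⬝ᵥ w = q := by
      rw [dotProduct_comm, ← dot_mulVec_symm A hAsym s w, hAw, hsd]
    have e3 : d ⬝ᵥ s = q := by rw [dotProduct_comm, hsd]
    rw [e1, e2, e3, hdw]
    ring
  -- key inequality
  have hkey : η^2 * S ≤ (η - 1)^2 * (p + 2*q + S) := by
    nlinarith [mul_le_mul_of_nonneg_left hSq (show (0:ℝ) ≤ 2*η - 1 by linarith),
      mul_le_mul_of_nonneg_left hq' (show (0:ℝ) ≤ η - 1 by linarith), hp, hq, hS]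
  have hc : 0 ≤ 1 - 1/η := by
    rw [sub_nonneg, div_le_one hη0]
    linarith
  have hkey' : S ≤ (1 - 1/η)^2 * (p + 2*q + S) := by
    have e : (1 - 1/η)^2 * (p + 2*q + S) = (η - 1)^2 * (p + 2*q + S) / η^2 := by
      field_simp
    rw [e, le_div_iff₀ (by positivity)]
    linarith [hkey]
  rw [hlam_new, hlam_old]
  calc Real.sqrt S ≤ Real.sqrt ((1 - 1/η)^2 * (p + 2*q + S)) := Real.sqrt_le_sqrt hkey'
    _ = (1 - 1/η) * Real.sqrt (p + 2*q + S) := by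
        rw [Real.sqrt_mul (by positivity), Real.sqrt_sq hc]

end Contraction

theorem quad_linear_convergence {n : ℕ} (A B : Matrix (Fin n) (Fin n) ℝ)
    (hA : A.PosDef) (hB : B.PosDef) (μ L : ℝ) (hμ : 0 < μ) (hμL : μ ≤ L)
    (hml : (A - μ • B).PosSemidef) (hmu : (L • B - A).PosSemidef)
    (b : Fin n → ℝ) (x : ℕ → Fin n → ℝ) (G : ℕ → Matrix (Fin n) (Fin n) ℝ)
    (φ : ℕ → ℝ) (hφ : ∀ k, φ k ∈ Set.Icc (0 : ℝ) 1)
    (hG0 : G 0 = L • B)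
    (hstep : ∀ k, x (k + 1) = x k - (G k)⁻¹.mulVec (A.mulVec (x k) - b))
    (hupd : ∀ k, G (k + 1) = Broyd (φ k) A (G k) (x (k + 1) - x k)) :
    ∀ k, (G k - A).PosSemidef ∧ ((L / μ) • A - G k).PosSemidef ∧
      lamQ A b (x k) ≤ (1 - μ / L) ^ k * lamQ A b (x 0) := by
  have hL : (0:ℝ) < L := lt_of_lt_of_le hμ hμL
  have hη : (1:ℝ) ≤ L / μ := (one_le_div hμ).mpr hμL
  have hrate : 1 - 1/(L/μ) = 1 - μ/L := by rw [one_div_div]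
  have hc : 0 ≤ 1 - μ/L := by
    rw [sub_nonneg, div_le_one hL]
    exact hμL
  intro k
  induction k with
  | zero =>
    refine ⟨?_, ?_, by simp⟩
    · rw [hG0]; exact hmu
    · rw [hG0]
      have e : (L/μ) • A - L • B = (L/μ) • (A - μ • B) := by
        rw [smul_sub, smul_smul, div_mul_cancel₀ _ (ne_of_gt hμ)]
      rw [e]
      exact psd_smul hml (by positivity)
  | succ k ih =>
    obtain ⟨ih1, ih2, ih3⟩ := ih
    have hφk := hφ k
    obtain ⟨hφ0, hφ1⟩ := hφk
    have hsand := broyd_bounds A (G k) hA (L/μ) hη ih1 ih2 (φ k) hφ0 hφ1 (x (k+1) - x k)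
    refine ⟨?_, ?_, ?_⟩
    · rw [hupd k]; exact hsand.1
    · rw [hupd k]; exact hsand.2
    · have hcon := contraction A (G k) hA (L/μ) hη ih1 ih2 b (x k)
      rw [hrate, ← hstep k] at hcon
      calc lamQ A b (x (k+1)) ≤ (1 - μ/L) * lamQ A b (x k) := hcon
        _ ≤ (1 - μ/L) * ((1 - μ/L)^k * lamQ A b (x 0)) :=
            mul_le_mul_of_nonneg_left ih3 hc
        _ = (1 - μ/L)^(k+1) * lamQ A b (x 0) := by ring
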